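/- Under the weighted distance D_n defined from points X_1,…,X_n and weights Γ_1,…,Γ_n, the ε-covering number of any policy class Π satisfies N_{D_n}(ε, Π, {X_i, Γ_i}) ≤ N_H(ε², Π), where N_H is the distribution-free Hamming covering number of Π. -/

import Mathlib

open Classical

/-- Normalized Hamming distance between two `{-1,+1}`-valued functions on a list of points. -/
noncomputable def hammingDistOn {X : Type*} {m : ℕ} (pts : Fin m → X) (f g : X → ℝ) : ℝ :=
  ((Finset.univ.filter fun j : Fin m => f (pts j) ≠ g (pts j)).card : ℝ) / m

/-- `HCoverBound Π ε N` : for every finite collection of points there is a set of at most `N`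
functions that `ε`-covers `Π` in normalized Hamming distance (distribution-free covering). -/
def HCoverBound {X : Type*} (Pi : Set (X → ℝ)) (ε : ℝ) (N : ℕ) : Prop :=
  ∀ (m : ℕ) (pts : Fin m → X), 0 < m →
    ∃ C : Finset (X → ℝ), C.card ≤ N ∧
      ∀ π ∈ Pi, ∃ c ∈ C, hammingDistOn pts π c ≤ ε

/-- The weighted distance `D_n` associated with points `X_i` and weights `Γ_i`. -/
noncomputable def Dn {X : Type*} {n : ℕ} (Xp : Fin n → X) (Γ : Fin n → ℝ)
    (π₁ π₂ : X → ℝ) : ℝ :=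
  Real.sqrt ((1 / 4) * (∑ i, (Γ i) ^ 2 * (π₁ (Xp i) - π₂ (Xp i)) ^ 2) / ∑ i, (Γ i) ^ 2)

set_option maxHeartbeats 1000000 in
/-- The `ε`-covering number of `Π` under `D_n` is at most the distribution-free Hamming
covering number at scale `ε²`: any `N` valid for `N_H(ε², Π)` admits an `ε`-cover under `D_n`
of cardinality at most `N`. -/
theorem Dn_covering_le_hamming_covering {X : Type*} {n : ℕ} (Xp : Fin n → X)
    (Γ : Fin n → ℝ) (hΓ : 0 < ∑ i, (Γ i) ^ 2) (hn : 0 < n)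
    (Pi : Set (X → ℝ)) (hPi : ∀ π ∈ Pi, ∀ x, π x = -1 ∨ π x = 1)
    (ε : ℝ) (hε : 0 < ε) (N : ℕ) (hN : HCoverBound Pi (ε ^ 2) N) :
    ∃ C : Finset (X → ℝ), C.card ≤ N ∧
      ∀ π ∈ Pi, ∃ c ∈ C, Dn Xp Γ π c ≤ ε := by
  classical
  set S := ∑ i, (Γ i) ^ 2 with hSdef
  set w : Fin n → ℝ := fun i => (Γ i) ^ 2 / S with hwdef
  have hw0 : ∀ i, 0 ≤ w i := fun i => div_nonneg (sq_nonneg _) hΓ.le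
  have hw1 : ∀ i, w i ≤ 1 := by
    intro i
    rw [hwdef]
    rw [div_le_one hΓ]
    exact Finset.single_le_sum (fun j _ => sq_nonneg (Γ j)) (Finset.mem_univ i)
  have hwsum : ∑ i, w i = 1 := by
    rw [hwdef, ← Finset.sum_div]
    exact div_self hΓ.ne'
  set T : Finset ℝ :=
    (Finset.univ : Finset (Fin n)).powerset.image (fun s : Finset (Fin n) => ∑ i ∈ s, w i)
    with hT
  obtain ⟨γ, hγ0, hγ⟩ : ∃ γ > 0, ∀ t ∈ T, t < ε ^ 2 + γ → t ≤ ε ^ 2 := by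
    rcases (T.filter (fun t => ε ^ 2 < t)).eq_empty_or_nonempty with hbad | hbad
    · refine ⟨1, one_pos, fun t ht _ => ?_⟩
      by_contra h
      have : t ∈ T.filter (fun t => ε ^ 2 < t) := Finset.mem_filter.2 ⟨ht, lt_of_not_ge h⟩
      simp [hbad] at this
    · have hmin := (T.filter (fun t => ε ^ 2 < t)).min'_mem hbad
      have h1 : ε ^ 2 < (T.filter (fun t => ε ^ 2 < t)).min' hbad :=
        (Finset.mem_filter.1 hmin).2
      refine ⟨(T.filter (fun t => ε ^ 2 < t)).min' hbad - ε ^ 2, by linarith,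
        fun t ht hlt => ?_⟩
      by_contra h
      have htb : t ∈ T.filter (fun t => ε ^ 2 < t) :=
        Finset.mem_filter.2 ⟨ht, lt_of_not_ge h⟩
      have := Finset.min'_le _ t htb
      linarith
  obtain ⟨m, hm⟩ := exists_nat_gt ((n : ℝ) ^ 2 / γ)
  have hm0 : (0 : ℝ) < m := lt_of_le_of_lt (div_nonneg (by positivity) hγ0.le) hm
  have hmγ : (n : ℝ) ^ 2 / m < γ := by
    rw [div_lt_iff₀ hm0]
    have h0 : (n : ℝ) ^ 2 / γ * γ = (n : ℝ) ^ 2 := div_mul_cancel₀ _ hγ0.ne'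
    have h1 := mul_lt_mul_of_pos_right hm hγ0
    have h2 : (m : ℝ) * γ = γ * m := mul_comm _ _
    linarith
  set mi : Fin n → ℕ := fun i => ⌈(m : ℝ) * w i⌉₊ with hmi
  have hmi_ge : ∀ i, (m : ℝ) * w i ≤ mi i := fun i => Nat.le_ceil _
  have hmi_le : ∀ i, (mi i : ℝ) ≤ m * w i + 1 := fun i =>
    le_of_lt (Nat.ceil_lt_add_one (mul_nonneg (Nat.cast_nonneg m) (hw0 i)))
  set M : ℕ := ∑ i, mi i with hM
  have hMcast : (M : ℝ) = ∑ i, (mi i : ℝ) := by rw [hM]; push_cast; rfl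
  have hM_ge : (m : ℝ) ≤ M := by
    have h1 : ∑ i, (m : ℝ) * w i ≤ ∑ i, (mi i : ℝ) :=
      Finset.sum_le_sum (fun i _ => hmi_ge i)
    rw [← Finset.mul_sum, hwsum, mul_one] at h1
    rw [hMcast]; exact h1
  have hM_le : (M : ℝ) ≤ m + n := by
    have h1 : ∑ i, (mi i : ℝ) ≤ ∑ i, ((m : ℝ) * w i + 1) :=
      Finset.sum_le_sum (fun i _ => hmi_le i)
    rw [Finset.sum_add_distrib, ← Finset.mul_sum, hwsum, mul_one] at h1
    rw [hMcast]
    simpa using h1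
  have hMr : (0 : ℝ) < M := lt_of_lt_of_le hm0 hM_ge
  have hMpos : 0 < M := by exact_mod_cast hMr
  set e : (Σ i : Fin n, Fin (mi i)) ≃ Fin M :=
    (Fintype.equivFin _).trans (finCongr (by simp [hM])) with he
  set pts : Fin M → X := fun j => Xp (e.symm j).1 with hpts
  have hre : ∀ g : Fin n → ℝ, ∑ j, g (e.symm j).1 = ∑ i, (mi i : ℝ) * g i := by
    intro g
    rw [← e.sum_comp (fun j => g (e.symm j).1)]
    simp only [Equiv.symm_apply_apply]
    rw [← Finset.univ_sigma_univ, Finset.sum_sigma]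
    simp [mul_comm]
  obtain ⟨C, hCcard, hCcov⟩ := hN M pts hMpos
  refine ⟨C.image (fun f => fun x => max (-1) (min 1 (f x))),
    le_trans (Finset.card_image_le) hCcard, ?_⟩
  intro π hπ
  obtain ⟨c, hcC, hcham⟩ := hCcov π hπ
  refine ⟨_, Finset.mem_image_of_mem _ hcC, ?_⟩
  set c' : X → ℝ := fun x => max (-1) (min 1 (c x)) with hc'
  show Dn Xp Γ π c' ≤ ε
  set g : Fin n → ℝ := fun i => if π (Xp i) = c (Xp i) then 0 else 1 with hg
  have hg01 : ∀ i, g i = 0 ∨ g i = 1 := by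
    intro i; by_cases h : π (Xp i) = c (Xp i) <;> simp [hg, h]
  have hgnn : ∀ i, 0 ≤ g i := by
    intro i; rcases hg01 i with h | h <;> rw [h] <;> norm_num
  have hgle1 : ∀ i, g i ≤ 1 := by
    intro i; rcases hg01 i with h | h <;> rw [h] <;> norm_num
  have hcard : ((Finset.univ.filter fun j : Fin M => π (pts j) ≠ c (pts j)).card : ℝ)
      = ∑ i, (mi i : ℝ) * g i := by
    rw [Finset.card_filter, ← hre g]
    push_cast
    apply Finset.sum_congr rfl
    intro j _
    by_cases h : π (pts j) = c (pts j) <;> simp [hg, hpts, h]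
  have hham2 : (∑ i, (mi i : ℝ) * g i) / M ≤ ε ^ 2 := by
    rw [← hcard]
    simpa [hammingDistOn] using hcham
  have hwkey : ∀ i, w i ≤ (mi i : ℝ) / M + n / m := by
    intro i
    have h1 : w i * M ≤ (mi i : ℝ) + n := by
      have h2 : w i * M ≤ w i * (m + n) := mul_le_mul_of_nonneg_left hM_le (hw0 i)
      have h3 : w i * (n : ℝ) ≤ 1 * n :=
        mul_le_mul_of_nonneg_right (hw1 i) (Nat.cast_nonneg n)
      have h4 := hmi_ge i
      nlinarith
    have h5 : w i ≤ ((mi i : ℝ) + n) / M := by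
      rw [le_div_iff₀ hMr]; linarith
    have h6 : ((mi i : ℝ) + n) / M = (mi i : ℝ) / M + n / M := add_div _ _ _
    have h7 : (n : ℝ) / M ≤ n / m :=
      div_le_div_of_nonneg_left (Nat.cast_nonneg n) hm0 hM_ge
    linarith
  have hsum_g : ∑ i, g i ≤ n := by
    calc ∑ i, g i ≤ ∑ _i : Fin n, (1 : ℝ) := Finset.sum_le_sum (fun i _ => hgle1 i)
    _ = n := by simp
  have hB : ∑ i, w i * g i ≤ ε ^ 2 := by
    have h1 : ∑ i, w i * g i ≤ ∑ i, ((mi i : ℝ) / M * g i + (n / m) * g i) := by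
      apply Finset.sum_le_sum
      intro i _
      have := hwkey i
      have := hgnn i
      nlinarith
    have h2 : ∑ i, ((mi i : ℝ) / M * g i + (n / m) * g i)
        = (∑ i, (mi i : ℝ) * g i) / M + (n / m) * ∑ i, g i := by
      rw [Finset.sum_add_distrib, ← Finset.mul_sum, Finset.sum_div]
      congr 1
      apply Finset.sum_congr rfl
      intro i _
      ring
    have h3 : (n / m : ℝ) * ∑ i, g i ≤ (n / m) * n :=
      mul_le_mul_of_nonneg_left hsum_g (by positivity)
    have h4 : (n / m : ℝ) * n = (n : ℝ) ^ 2 / m := by ring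
    have hlt : ∑ i, w i * g i < ε ^ 2 + γ := by
      rw [h2] at h1
      nlinarith
    have hmemT : ∑ i, w i * g i ∈ T := by
      rw [hT]
      refine Finset.mem_image.2 ⟨Finset.univ.filter (fun i => ¬ π (Xp i) = c (Xp i)),
        Finset.mem_powerset.2 (Finset.subset_univ _), ?_⟩
      rw [Finset.sum_filter]
      apply Finset.sum_congr rfl
      intro i _
      by_cases h : π (Xp i) = c (Xp i) <;> simp [hg, h]
    exact hγ _ hmemT hlt
  have hc'lo : ∀ x, -1 ≤ c' x := fun x => le_max_left _ _
  have hc'hi : ∀ x, c' x ≤ 1 := fun x => max_le (by norm_num) (min_le_left _ _)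
  have hterm : ∀ i, (Γ i) ^ 2 * (π (Xp i) - c' (Xp i)) ^ 2 ≤ 4 * (Γ i) ^ 2 * g i := by
    intro i
    by_cases h : π (Xp i) = c (Xp i)
    · have hgi : g i = 0 := by simp [hg, h]
      have h2 : c (Xp i) = π (Xp i) := h.symm
      have hcx : c' (Xp i) = π (Xp i) := by
        show -1 ⊔ 1 ⊓ c (Xp i) = π (Xp i)
        rw [h2]
        rcases hPi π hπ (Xp i) with h1 | h1 <;> rw [h1] <;> norm_num
      rw [hgi, hcx]
      simp
    · have hgi : g i = 1 := by simp [hg, h]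
      have hd : (π (Xp i) - c' (Xp i)) ^ 2 ≤ 4 := by
        have ha := hc'lo (Xp i)
        have hb := hc'hi (Xp i)
        rcases hPi π hπ (Xp i) with h1 | h1 <;> rw [h1] <;> nlinarith
      rw [hgi, mul_one]
      nlinarith [sq_nonneg (Γ i)]
  have hsum : ∑ i, (Γ i) ^ 2 * (π (Xp i) - c' (Xp i)) ^ 2 ≤ 4 * S * (∑ i, w i * g i) := by
    calc ∑ i, (Γ i) ^ 2 * (π (Xp i) - c' (Xp i)) ^ 2
        ≤ ∑ i, 4 * (Γ i) ^ 2 * g i := Finset.sum_le_sum (fun i _ => hterm i)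
    _ = 4 * S * ∑ i, w i * g i := by
        rw [Finset.mul_sum]
        apply Finset.sum_congr rfl
        intro i _
        rw [hwdef]
        field_simp
  have hA : (1 / 4) * (∑ i, (Γ i) ^ 2 * (π (Xp i) - c' (Xp i)) ^ 2) / S ≤ ε ^ 2 := by
    rw [div_le_iff₀ hΓ]
    nlinarith [mul_le_mul_of_nonneg_left hB hΓ.le]
  rw [Dn]
  calc Real.sqrt ((1 / 4) * (∑ i, (Γ i) ^ 2 * (π (Xp i) - c' (Xp i)) ^ 2) / ∑ i, (Γ i) ^ 2)
      ≤ Real.sqrt (ε ^ 2) := Real.sqrt_le_sqrt hA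
  _ = ε := Real.sqrt_sq hε.le
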